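/- Fix a real number t, a real σ > 0, and trimming proportions a, b with 0 ≤ a, 0 < b and a + b < 1. For θ ∈ ℝ write γ(θ) = (t − θ)/σ and define c_{y,2}(θ) = (1/(1 − a − b))·∫_a^{1−b} (Φ⁻¹(s + (1 − s)·Φ(γ(θ))))² ds. Then c_{y,2} is differentiable in θ with derivative c_{y,2}'(θ) = −(2·φ(γ(θ)) / (σ·(1 − a − b)))·∫_a^{1−b} (1 − s)·Φ⁻¹(s + (1 − s)·Φ(γ(θ))) / φ(Φ⁻¹(s + (1 − s)·Φ(γ(θ)))) ds. -/

import Mathlib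

open Real MeasureTheory

/-- Standard normal density `φ(x) = (2π)^(−1/2) exp(−x²/2)`. -/
noncomputable def stdPDF (x : ℝ) : ℝ := (Real.sqrt (2 * Real.pi))⁻¹ * Real.exp (-x ^ 2 / 2)

/-- Standard normal cumulative distribution function `Φ(x) = ∫_{−∞}^x φ(u) du`. -/
noncomputable def stdCDF (x : ℝ) : ℝ := ∫ u in Set.Iic x, stdPDF u

/-- Mills hazard `h(γ) = φ(γ)/(1 − Φ(γ))`. -/
noncomputable def millsHazard (γ : ℝ) : ℝ := stdPDF γ / (1 - stdCDF γ)

/-- The standard normal quantile function `Φ⁻¹`, the inverse of `Φ`. -/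
noncomputable def stdQuantile : ℝ → ℝ := Function.invFun stdCDF


open Filter Set Topology

lemma continuous_stdPDF : Continuous stdPDF := by unfold stdPDF; fun_prop

lemma sqrt2pi_pos : 0 < Real.sqrt (2 * Real.pi) := Real.sqrt_pos.2 (by positivity)

lemma stdPDF_pos (x : ℝ) : 0 < stdPDF x := mul_pos (inv_pos.2 sqrt2pi_pos) (Real.exp_pos _)

lemma stdPDF_le (x : ℝ) : stdPDF x ≤ (Real.sqrt (2 * Real.pi))⁻¹ := by
  rw [stdPDF]
  apply mul_le_of_le_one_right (inv_nonneg.2 sqrt2pi_pos.le)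
  exact Real.exp_le_one_iff.2 (by nlinarith [sq_nonneg x])

lemma stdPDF_eq : stdPDF = fun x => (Real.sqrt (2 * Real.pi))⁻¹ * Real.exp (-(2⁻¹) * x ^ 2) := by
  funext x; rw [stdPDF]; congr 1; ring

lemma integrable_stdPDF : Integrable stdPDF := by
  rw [stdPDF_eq]
  exact (integrable_exp_neg_mul_sq (by norm_num : (0:ℝ) < 2⁻¹)).const_mul _

lemma integral_stdPDF : ∫ x, stdPDF x = 1 := by
  rw [stdPDF_eq, MeasureTheory.integral_const_mul, integral_gaussian,
    show Real.pi / 2⁻¹ = 2 * Real.pi by ring]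
  exact inv_mul_cancel₀ sqrt2pi_pos.ne'

lemma stdCDF_sub (x y : ℝ) : stdCDF y - stdCDF x = ∫ u in x..y, stdPDF u :=
  intervalIntegral.integral_Iic_sub_Iic integrable_stdPDF.integrableOn integrable_stdPDF.integrableOn

lemma hasStrictDerivAt_stdCDF (x : ℝ) : HasStrictDerivAt stdCDF (stdPDF x) x := by
  have h : stdCDF = fun y => stdCDF 0 + ∫ u in (0:ℝ)..y, stdPDF u := by
    funext y; rw [← stdCDF_sub 0 y]; ring
  rw [h]
  exact (continuous_stdPDF.integral_hasStrictDerivAt 0 x).const_add (stdCDF 0)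

lemma continuous_stdCDF : Continuous stdCDF :=
  continuous_iff_continuousAt.2 fun x => (hasStrictDerivAt_stdCDF x).hasDerivAt.continuousAt

lemma strictMono_stdCDF : StrictMono stdCDF := fun x y hxy => by
  have h := stdCDF_sub x y
  have hpos : 0 < ∫ u in x..y, stdPDF u :=
    intervalIntegral.intervalIntegral_pos_of_pos_on (continuous_stdPDF.intervalIntegrable x y)
      (fun u _ => stdPDF_pos u) hxy
  linarith

lemma stdCDF_nonneg (x : ℝ) : 0 ≤ stdCDF x :=
  MeasureTheory.setIntegral_nonneg measurableSet_Iic fun u _ => (stdPDF_pos u).le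

lemma stdCDF_pos (x : ℝ) : 0 < stdCDF x := by
  have h := stdCDF_sub (x - 1) x
  have h2 := stdCDF_nonneg (x - 1)
  have hpos : 0 < ∫ u in (x-1)..x, stdPDF u :=
    intervalIntegral.intervalIntegral_pos_of_pos_on
      (continuous_stdPDF.intervalIntegrable _ _) (fun u _ => stdPDF_pos u) (by linarith)
  linarith

lemma stdCDF_lt_one (x : ℝ) : stdCDF x < 1 := by
  have hsplit : stdCDF x + ∫ u in Set.Ioi x, stdPDF u = 1 := by
    rw [stdCDF, intervalIntegral.integral_Iic_add_Ioi integrable_stdPDF.integrableOn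
      integrable_stdPDF.integrableOn, integral_stdPDF]
  have h2 : (0:ℝ) < ∫ u in Set.Ioc x (x+1), stdPDF u := by
    rw [← intervalIntegral.integral_of_le (by linarith)]
    exact intervalIntegral.intervalIntegral_pos_of_pos_on
      (continuous_stdPDF.intervalIntegrable _ _) (fun u _ => stdPDF_pos u) (by linarith)
  have h3 : (∫ u in Set.Ioc x (x+1), stdPDF u) ≤ ∫ u in Set.Ioi x, stdPDF u :=
    MeasureTheory.setIntegral_mono_set integrable_stdPDF.integrableOn
      (Filter.Eventually.of_forall fun u => (stdPDF_pos u).le)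
      (HasSubset.Subset.eventuallyLE Set.Ioc_subset_Ioi_self)
  linarith

lemma tendsto_stdCDF_neg_nat : Tendsto (fun n : ℕ => stdCDF (-(n:ℝ))) atTop (𝓝 0) := by
  have h := MeasureTheory.tendsto_setIntegral_of_antitone (μ := volume) (f := stdPDF)
    (s := fun n : ℕ => Set.Iic (-(n:ℝ))) (fun i => measurableSet_Iic)
    (fun i j hij => Set.Iic_subset_Iic.2 (neg_le_neg (Nat.cast_le.2 hij)))
    ⟨0, integrable_stdPDF.integrableOn⟩
  have hempty : ⋂ n : ℕ, Set.Iic (-(n:ℝ)) = ∅ := by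
    ext x
    simp only [Set.mem_iInter, Set.mem_Iic, Set.mem_empty_iff_false, iff_false, not_forall, not_le]
    obtain ⟨n, hn⟩ := exists_nat_gt (-x)
    exact ⟨n, by linarith⟩
  rwa [hempty, MeasureTheory.setIntegral_empty] at h

lemma tendsto_stdCDF_nat : Tendsto (fun n : ℕ => stdCDF (n:ℝ)) atTop (𝓝 1) := by
  have h := MeasureTheory.tendsto_setIntegral_of_monotone (μ := volume) (f := stdPDF)
    (s := fun n : ℕ => Set.Iic ((n:ℝ))) (fun i => measurableSet_Iic)
    (fun i j hij => Set.Iic_subset_Iic.2 (Nat.cast_le.2 hij))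
    (by
      have : ⋃ n : ℕ, Set.Iic ((n:ℝ)) = Set.univ := by
        ext x
        simp only [Set.mem_iUnion, Set.mem_Iic, Set.mem_univ, iff_true]
        obtain ⟨n, hn⟩ := exists_nat_ge x
        exact ⟨n, hn⟩
      rw [this]; exact integrable_stdPDF.integrableOn)
  have huniv : ⋃ n : ℕ, Set.Iic ((n:ℝ)) = Set.univ := by
    ext x
    simp only [Set.mem_iUnion, Set.mem_Iic, Set.mem_univ, iff_true]
    obtain ⟨n, hn⟩ := exists_nat_ge x
    exact ⟨n, hn⟩
  rwa [huniv, MeasureTheory.setIntegral_univ, integral_stdPDF] at h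

lemma stdCDF_surj {y : ℝ} (hy : y ∈ Set.Ioo (0:ℝ) 1) : ∃ x, stdCDF x = y := by
  obtain ⟨n, hn⟩ := (tendsto_stdCDF_neg_nat.eventually_lt_const hy.1).exists
  obtain ⟨m, hm⟩ := (tendsto_stdCDF_nat.eventually_const_lt hy.2).exists
  have hsub := intermediate_value_uIcc (a := -(n:ℝ)) (b := (m:ℝ))
    continuous_stdCDF.continuousOn
  have hmem : y ∈ Set.uIcc (stdCDF (-(n:ℝ))) (stdCDF (m:ℝ)) :=
    Set.mem_uIcc.2 (Or.inl ⟨hn.le, hm.le⟩)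
  obtain ⟨x, _, hx⟩ := hsub hmem
  exact ⟨x, hx⟩

lemma stdQuantile_stdCDF (x : ℝ) : stdQuantile (stdCDF x) = x :=
  Function.leftInverse_invFun strictMono_stdCDF.injective x

lemma stdCDF_stdQuantile {y : ℝ} (hy : y ∈ Set.Ioo (0:ℝ) 1) : stdCDF (stdQuantile y) = y :=
  Function.invFun_eq (stdCDF_surj hy)

lemma hasStrictDerivAt_stdQuantile {y : ℝ} (hy : y ∈ Set.Ioo (0:ℝ) 1) :
    HasStrictDerivAt stdQuantile (stdPDF (stdQuantile y))⁻¹ y := by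
  obtain ⟨x, hx⟩ := stdCDF_surj hy
  have h := (hasStrictDerivAt_stdCDF x).to_local_left_inverse (g := stdQuantile)
    (stdPDF_pos x).ne' (Filter.Eventually.of_forall stdQuantile_stdCDF)
  rw [hx] at h
  have hq : stdQuantile y = x := by rw [← hx, stdQuantile_stdCDF]
  rw [hq]
  exact h

set_option maxHeartbeats 2000000 in
/-- Differentiability of `c_{y,2}(θ)` with the stated derivative. -/
theorem cY2_hasDerivAt (t σ a b : ℝ) (hσ : 0 < σ) (ha : 0 ≤ a) (hb : 0 < b)
    (hab : a + b < 1) (θ : ℝ) :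
    HasDerivAt
      (fun θ' : ℝ => (1 - a - b)⁻¹ *
        ∫ s in a..(1 - b), (stdQuantile (s + (1 - s) * stdCDF ((t - θ') / σ))) ^ 2)
      (-(2 * stdPDF ((t - θ) / σ) / (σ * (1 - a - b))) *
        ∫ s in a..(1 - b),
          (1 - s) * stdQuantile (s + (1 - s) * stdCDF ((t - θ) / σ)) /
            stdPDF (stdQuantile (s + (1 - s) * stdCDF ((t - θ) / σ))))
      θ := by
  have hba : a < 1 - b := by linarith
  have hle : a ≤ 1 - b := hba.le
  have hc_cont : Continuous (fun x : ℝ => stdCDF ((t - x) / σ)) :=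
    continuous_stdCDF.comp (by fun_prop)
  have hθK : θ ∈ Set.Icc (θ - 1) (θ + 1) := ⟨by linarith, by linarith⟩
  obtain ⟨x₁, hx₁K, hx₁⟩ := (isCompact_Icc (a := θ - 1) (b := θ + 1)).exists_isMinOn
    ⟨θ, hθK⟩ hc_cont.continuousOn
  obtain ⟨x₂, hx₂K, hx₂⟩ := (isCompact_Icc (a := θ - 1) (b := θ + 1)).exists_isMaxOn
    ⟨θ, hθK⟩ hc_cont.continuousOn
  set m := stdCDF ((t - x₁) / σ) with hm
  set M := stdCDF ((t - x₂) / σ) with hM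
  have hm0 : 0 < m := stdCDF_pos _
  have hM1 : M < 1 := stdCDF_lt_one _
  have hm1 : m < 1 := stdCDF_lt_one _
  have hM0 : 0 < M := stdCDF_pos _
  have hmM : m ≤ M := le_trans (isMinOn_iff.1 hx₁ θ hθK) (isMaxOn_iff.1 hx₂ θ hθK)
  set u₁ := a + (1 - a) * m with hu₁
  set u₂ := (1 - b) + b * M with hu₂
  have hu₁0 : 0 < u₁ := by nlinarith
  have hu₂1 : u₂ < 1 := by nlinarith
  have hu₁₂ : u₁ ≤ u₂ := by nlinarith
  -- membership of u x s in [u₁, u₂] for x in the window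
  have humem : ∀ x ∈ Set.Icc (θ - 1) (θ + 1), ∀ s ∈ Set.Icc a (1 - b),
      s + (1 - s) * stdCDF ((t - x) / σ) ∈ Set.Icc u₁ u₂ := by
    intro x hx s hs
    have h1 : m ≤ stdCDF ((t - x) / σ) := isMinOn_iff.1 hx₁ x hx
    have h2 : stdCDF ((t - x) / σ) ≤ M := isMaxOn_iff.1 hx₂ x hx
    obtain ⟨hs1, hs2⟩ := hs
    constructor <;> nlinarith
  have hIooSub : Set.Icc u₁ u₂ ⊆ Set.Ioo (0 : ℝ) 1 := fun y hy =>
    ⟨lt_of_lt_of_le hu₁0 hy.1, lt_of_le_of_lt hy.2 hu₂1⟩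
  -- membership in (0,1) for arbitrary x
  have humem' : ∀ (x : ℝ), ∀ s ∈ Set.Icc a (1 - b),
      s + (1 - s) * stdCDF ((t - x) / σ) ∈ Set.Ioo (0 : ℝ) 1 := by
    intro x s hs
    have h1 := stdCDF_pos ((t - x) / σ)
    have h2 := stdCDF_lt_one ((t - x) / σ)
    obtain ⟨hs1, hs2⟩ := hs
    constructor <;> nlinarith
  -- continuity of quantile composition
  have hQuIoo : ContinuousOn stdQuantile (Set.Ioo (0:ℝ) 1) := fun y hy =>
    ((hasStrictDerivAt_stdQuantile hy).hasDerivAt.continuousAt).continuousWithinAt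
  have hQu : ∀ x : ℝ, ContinuousOn
      (fun s => stdQuantile (s + (1 - s) * stdCDF ((t - x) / σ))) (Set.Icc a (1 - b)) := by
    intro x
    have hcomp := hQuIoo.comp (f := fun s : ℝ => s + (1 - s) * stdCDF ((t - x) / σ))
      (Continuous.continuousOn (by fun_prop)) (fun s hs => humem' x s hs)
    simpa [Function.comp_def] using hcomp
  have hQuIcc : ContinuousOn stdQuantile (Set.Icc u₁ u₂) := fun y hy =>
    ((hasStrictDerivAt_stdQuantile (hIooSub hy)).hasDerivAt.continuousAt).continuousWithinAt
  -- bounds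
  obtain ⟨C₁, hC₁⟩ := (isCompact_Icc (a := u₁) (b := u₂)).exists_bound_of_continuousOn hQuIcc
  obtain ⟨y₀, hy₀mem, hy₀⟩ := (isCompact_Icc (a := u₁) (b := u₂)).exists_isMinOn
    ⟨u₁, Set.left_mem_Icc.2 hu₁₂⟩ (continuous_stdPDF.comp_continuousOn hQuIcc)
  set c₀ := stdPDF (stdQuantile y₀) with hc₀def
  have hc₀ : 0 < c₀ := stdPDF_pos _
  have hC₁0 : 0 ≤ C₁ := le_trans (abs_nonneg _) (hC₁ u₁ (Set.left_mem_Icc.2 hu₁₂))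
  set B := C₁ * (2 * c₀⁻¹ * (1 - a) * (Real.sqrt (2 * Real.pi))⁻¹ / σ) with hB
  have hUsub : Set.uIoc a (1 - b) ⊆ Set.Icc a (1 - b) := by
    rw [Set.uIoc_of_le hle]; exact Set.Ioc_subset_Icc_self
  -- measurability facts
  have hFcontOn : ∀ x : ℝ, ContinuousOn
      (fun s => stdQuantile (s + (1 - s) * stdCDF ((t - x) / σ)) ^ 2) (Set.Icc a (1 - b)) :=
    fun x => (hQu x).pow 2
  have hF_meas : ∀ᶠ x in 𝓝 θ, AEStronglyMeasurable
      (fun s => stdQuantile (s + (1 - s) * stdCDF ((t - x) / σ)) ^ 2)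
      (volume.restrict (Set.uIoc a (1 - b))) :=
    Filter.Eventually.of_forall fun x =>
      ((hFcontOn x).aestronglyMeasurable measurableSet_Icc).mono_measure
        (Measure.restrict_mono hUsub le_rfl)
  have hF_int : IntervalIntegrable
      (fun s => stdQuantile (s + (1 - s) * stdCDF ((t - θ) / σ)) ^ 2) volume a (1 - b) := by
    apply ContinuousOn.intervalIntegrable
    rw [Set.uIcc_of_le hle]; exact hFcontOn θ
  have hF'contOn : ContinuousOn (fun s =>
      2 * stdQuantile (s + (1 - s) * stdCDF ((t - θ) / σ)) *
        ((stdPDF (stdQuantile (s + (1 - s) * stdCDF ((t - θ) / σ))))⁻¹ *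
          ((1 - s) * (stdPDF ((t - θ) / σ) * (-1 / σ))))) (Set.Icc a (1 - b)) := by
    apply ContinuousOn.mul
    · exact continuousOn_const.mul (hQu θ)
    · apply ContinuousOn.mul
      · exact (continuous_stdPDF.comp_continuousOn (hQu θ)).inv₀
          (fun s hs => (stdPDF_pos _).ne')
      · exact Continuous.continuousOn (by fun_prop)
  have hF'_meas : AEStronglyMeasurable (fun s =>
      2 * stdQuantile (s + (1 - s) * stdCDF ((t - θ) / σ)) *
        ((stdPDF (stdQuantile (s + (1 - s) * stdCDF ((t - θ) / σ))))⁻¹ *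
          ((1 - s) * (stdPDF ((t - θ) / σ) * (-1 / σ)))))
      (volume.restrict (Set.uIoc a (1 - b))) :=
    (hF'contOn.aestronglyMeasurable measurableSet_Icc).mono_measure
      (Measure.restrict_mono hUsub le_rfl)
  -- the bound
  have h_bound : ∀ᵐ s : ℝ ∂volume, s ∈ Set.uIoc a (1 - b) → ∀ x ∈ Metric.ball θ 1,
      ‖2 * stdQuantile (s + (1 - s) * stdCDF ((t - x) / σ)) *
        ((stdPDF (stdQuantile (s + (1 - s) * stdCDF ((t - x) / σ))))⁻¹ *
          ((1 - s) * (stdPDF ((t - x) / σ) * (-1 / σ))))‖ ≤ B := by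
    refine Filter.Eventually.of_forall fun s hs x hx => ?_
    have hsIcc : s ∈ Set.Icc a (1 - b) := hUsub hs
    have hxK : x ∈ Set.Icc (θ - 1) (θ + 1) := by
      rw [Metric.mem_ball, Real.dist_eq] at hx
      have := abs_lt.1 hx
      exact ⟨by linarith [this.1], by linarith [this.2]⟩
    have humem2 := humem x hxK s hsIcc
    set u := s + (1 - s) * stdCDF ((t - x) / σ)
    set q := stdQuantile u with hq
    set p := stdPDF (stdQuantile u) with hp
    set g := stdPDF ((t - x) / σ) with hg
    have hp0 : 0 < p := stdPDF_pos _
    have hg0 : 0 < g := stdPDF_pos _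
    have hs1 : 0 ≤ 1 - s := by linarith [hsIcc.2]
    have heq : 2 * q * (p⁻¹ * ((1 - s) * (g * (-1 / σ)))) =
        q * (-(2 * p⁻¹ * (1 - s) * g / σ)) := by ring
    have hXnn : 0 ≤ 2 * p⁻¹ * (1 - s) * g / σ :=
      div_nonneg (mul_nonneg (mul_nonneg (mul_nonneg (by norm_num) (inv_nonneg.2 hp0.le)) hs1)
        hg0.le) hσ.le
    rw [Real.norm_eq_abs, heq, abs_mul, abs_neg, abs_of_nonneg hXnn]
    have h1 : |q| ≤ C₁ := hC₁ u humem2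
    have h2 : p⁻¹ ≤ c₀⁻¹ := by
      apply inv_anti₀ hc₀
      exact isMinOn_iff.1 hy₀ u humem2
    have h3 : 1 - s ≤ 1 - a := by linarith [hsIcc.1]
    have h4 : g ≤ (Real.sqrt (2 * Real.pi))⁻¹ := stdPDF_le _
    have hA : 2 * p⁻¹ ≤ 2 * c₀⁻¹ := mul_le_mul_of_nonneg_left h2 (by norm_num)
    have hBle : 2 * p⁻¹ * (1 - s) ≤ 2 * c₀⁻¹ * (1 - a) :=
      mul_le_mul hA h3 hs1 (mul_nonneg (by norm_num) (inv_nonneg.2 hc₀.le))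
    have hCle : 2 * p⁻¹ * (1 - s) * g ≤ 2 * c₀⁻¹ * (1 - a) * (Real.sqrt (2 * Real.pi))⁻¹ :=
      mul_le_mul hBle h4 hg0.le
        (mul_nonneg (mul_nonneg (by norm_num) (inv_nonneg.2 hc₀.le)) (by linarith))
    have hXY : 2 * p⁻¹ * (1 - s) * g / σ ≤
        2 * c₀⁻¹ * (1 - a) * (Real.sqrt (2 * Real.pi))⁻¹ / σ := by
      rw [div_eq_mul_inv, div_eq_mul_inv]
      exact mul_le_mul_of_nonneg_right hCle (inv_nonneg.2 hσ.le)
    rw [hB]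
    exact mul_le_mul h1 hXY hXnn hC₁0
  have hbound_int : IntervalIntegrable (fun _ : ℝ => B) volume a (1 - b) :=
    intervalIntegrable_const
  -- differentiability in x
  have h_diff : ∀ᵐ s : ℝ ∂volume, s ∈ Set.uIoc a (1 - b) → ∀ x ∈ Metric.ball θ 1,
      HasDerivAt (fun x => stdQuantile (s + (1 - s) * stdCDF ((t - x) / σ)) ^ 2)
        (2 * stdQuantile (s + (1 - s) * stdCDF ((t - x) / σ)) *
          ((stdPDF (stdQuantile (s + (1 - s) * stdCDF ((t - x) / σ))))⁻¹ *
            ((1 - s) * (stdPDF ((t - x) / σ) * (-1 / σ))))) x := by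
    refine Filter.Eventually.of_forall fun s hs x hx => ?_
    have hsIcc : s ∈ Set.Icc a (1 - b) := hUsub hs
    have hγd : HasDerivAt (fun x : ℝ => (t - x) / σ) (-1 / σ) x := by
      simpa using ((hasDerivAt_id x).const_sub t).div_const σ
    have hcd : HasDerivAt (fun x : ℝ => stdCDF ((t - x) / σ))
        (stdPDF ((t - x) / σ) * (-1 / σ)) x := by
      simpa [Function.comp_def] using
        ((hasStrictDerivAt_stdCDF ((t - x) / σ)).hasDerivAt.comp x hγd)
    have hud : HasDerivAt (fun x : ℝ => s + (1 - s) * stdCDF ((t - x) / σ))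
        ((1 - s) * (stdPDF ((t - x) / σ) * (-1 / σ))) x := (hcd.const_mul (1 - s)).const_add s
    have hmem := humem' x s hsIcc
    have hqd : HasDerivAt (fun x : ℝ => stdQuantile (s + (1 - s) * stdCDF ((t - x) / σ)))
        ((stdPDF (stdQuantile (s + (1 - s) * stdCDF ((t - x) / σ))))⁻¹ *
          ((1 - s) * (stdPDF ((t - x) / σ) * (-1 / σ)))) x := by
      simpa [Function.comp_def] using
        ((hasStrictDerivAt_stdQuantile hmem).hasDerivAt.comp x hud)
    have h2 := hqd.fun_pow 2
    convert! h2 using 1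
    push_cast
    ring
  have main := intervalIntegral.hasDerivAt_integral_of_dominated_loc_of_deriv_le
    (𝕜 := ℝ) (μ := volume) (a := a) (b := 1 - b) (x₀ := θ)
    (F := fun x s => stdQuantile (s + (1 - s) * stdCDF ((t - x) / σ)) ^ 2)
    (F' := fun x s => 2 * stdQuantile (s + (1 - s) * stdCDF ((t - x) / σ)) *
      ((stdPDF (stdQuantile (s + (1 - s) * stdCDF ((t - x) / σ))))⁻¹ *
        ((1 - s) * (stdPDF ((t - x) / σ) * (-1 / σ)))))
    (bound := fun _ => B)
    (Metric.ball_mem_nhds θ one_pos) hF_meas hF_int hF'_meas h_bound hbound_int h_diff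
  have final := main.2.const_mul ((1 - a - b)⁻¹)
  convert! final using 1
  have hint : (∫ s in a..(1 - b),
      2 * stdQuantile (s + (1 - s) * stdCDF ((t - θ) / σ)) *
        ((stdPDF (stdQuantile (s + (1 - s) * stdCDF ((t - θ) / σ))))⁻¹ *
          ((1 - s) * (stdPDF ((t - θ) / σ) * (-1 / σ))))) =
      (-(2 * stdPDF ((t - θ) / σ) * σ⁻¹)) *
        ∫ s in a..(1 - b), (1 - s) * stdQuantile (s + (1 - s) * stdCDF ((t - θ) / σ)) /
          stdPDF (stdQuantile (s + (1 - s) * stdCDF ((t - θ) / σ))) := by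
    rw [← intervalIntegral.integral_const_mul]
    apply intervalIntegral.integral_congr
    intro s hs
    ring
  show _ = (1 - a - b)⁻¹ * _
  beta_reduce
  rw [hint, ← mul_assoc]
  congr 1
  rw [div_eq_mul_inv, mul_inv]
  ring
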